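/- Let x_1, ..., x_d be nonnegative reals whose sum equals a natural number N. Then there exist finitely many vectors y^{(1)}, ..., y^{(m)} with natural-number entries and nonnegative weights a_1, ..., a_m summing to 1 such that: (i) for every r and every coordinate i, y^{(r)}_i equals either the floor of x_i or the ceiling of x_i; (ii) for every r, the coordinates of y^{(r)} sum to N; and (iii) sum_{r=1}^m a_r y^{(r)} = x coordinate-wise. -/

import Mathlib

open scoped BigOperators

private lemma round_mem {x : ℝ} {z : ℤ} (h1 : ⌊x⌋ ≤ z) (h2 : z ≤ ⌈x⌉) :
    z = ⌊x⌋ ∨ z = ⌈x⌉ := by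
  have := Int.ceil_le_floor_add_one x
  omega

private lemma comb_aux (d : ℕ) : ∀ (n : ℕ) (x : Fin d → ℝ), (∀ i, 0 ≤ x i) →
    ∀ (N : ℕ), ∑ i, x i = (N : ℝ) →
    (Finset.univ.filter fun i => x i ≠ ⌊x i⌋).card ≤ n →
    ∃ (m : ℕ) (y : Fin m → (Fin d → ℕ)) (a : Fin m → ℝ),
      (∀ r, 0 ≤ a r) ∧ (∑ r, a r = 1) ∧
      (∀ r i, ((y r i : ℤ) = ⌊x i⌋ ∨ (y r i : ℤ) = ⌈x i⌉)) ∧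
      (∀ r, ∑ i, y r i = N) ∧
      (∀ i, ∑ r, a r * (y r i : ℝ) = x i) := by
  intro n
  induction n with
  | zero =>
    intro x hx N hsum hcard
    have hint : ∀ i, x i = (⌊x i⌋ : ℝ) := by
      intro i
      by_contra h
      have : i ∈ Finset.univ.filter fun i => x i ≠ (⌊x i⌋ : ℝ) := by
        simp [h]
      have := Finset.card_pos.mpr ⟨i, this⟩
      omega
    have h0 : ∀ i, (0:ℤ) ≤ ⌊x i⌋ := fun i => Int.floor_nonneg.mpr (hx i)
    have hcast : ∀ i, ((⌊x i⌋.toNat : ℕ) : ℝ) = x i := by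
      intro i
      have : ((⌊x i⌋.toNat : ℕ) : ℝ) = ((⌊x i⌋ : ℤ) : ℝ) := by
        exact_mod_cast Int.toNat_of_nonneg (h0 i)
      rw [this]; exact (hint i).symm
    refine ⟨1, fun _ i => (⌊x i⌋).toNat, fun _ => 1, fun _ => zero_le_one, by simp, ?_, ?_, ?_⟩
    · intro r i
      left
      exact Int.toNat_of_nonneg (h0 i)
    · intro r
      have : ((∑ i, (⌊x i⌋).toNat : ℕ) : ℝ) = (N : ℝ) := by
        push_cast
        rw [← hsum]
        exact Finset.sum_congr rfl fun i _ => hcast i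
      exact_mod_cast this
    · intro i
      simp [hcast i]
  | succ n IH =>
    intro x hx N hsum hcard
    by_cases hle : (Finset.univ.filter fun i => x i ≠ (⌊x i⌋:ℝ)).card ≤ n
    · exact IH x hx N hsum hle
    have hcard' : (Finset.univ.filter fun i => x i ≠ (⌊x i⌋:ℝ)).card = n + 1 := by omega
    -- pick a fractional coordinate i
    obtain ⟨i, hi⟩ : ∃ i, x i ≠ (⌊x i⌋:ℝ) := by
      have : (Finset.univ.filter fun i => x i ≠ (⌊x i⌋:ℝ)).Nonempty :=
        Finset.card_pos.mp (by omega)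
      obtain ⟨i, hi⟩ := this
      exact ⟨i, (Finset.mem_filter.mp hi).2⟩
    -- pick another fractional coordinate j ≠ i
    obtain ⟨j, hj, hji⟩ : ∃ j, x j ≠ (⌊x j⌋:ℝ) ∧ j ≠ i := by
      by_contra h
      push_neg at h
      have hallint : ∀ k, k ≠ i → x k = (⌊x k⌋:ℝ) := by
        intro k hk
        by_contra hk'
        exact hk (h k hk')
      have hsplit : x i + ∑ k ∈ Finset.univ.erase i, x k = (N : ℝ) := by
        rw [Finset.add_sum_erase _ _ (Finset.mem_univ i)]
        exact hsum
      have : x i = (((N : ℤ) - ∑ k ∈ Finset.univ.erase i, ⌊x k⌋ : ℤ) : ℝ) := by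
        push_cast
        rw [Finset.sum_congr rfl (fun k hk => hallint k (Finset.ne_of_mem_erase hk))] at hsplit
        linarith
      apply hi
      rw [this, Int.floor_intCast]
    have hij : i ≠ j := fun h => hji h.symm
    -- strict inequalities
    have hfi : (⌊x i⌋:ℝ) < x i := lt_of_le_of_ne (Int.floor_le _) (Ne.symm hi)
    have hfj : (⌊x j⌋:ℝ) < x j := lt_of_le_of_ne (Int.floor_le _) (Ne.symm hj)
    have hci : x i < (⌈x i⌉:ℝ) := by
      refine lt_of_le_of_ne (Int.le_ceil _) fun h => hi ?_
      rw [h, Int.floor_intCast]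
    have hcj : x j < (⌈x j⌉:ℝ) := by
      refine lt_of_le_of_ne (Int.le_ceil _) fun h => hj ?_
      rw [h, Int.floor_intCast]
    set t : ℝ := min ((⌈x i⌉:ℝ) - x i) (x j - (⌊x j⌋:ℝ)) with ht_def
    set s : ℝ := min (x i - (⌊x i⌋:ℝ)) ((⌈x j⌉:ℝ) - x j) with hs_def
    have ht : 0 < t := lt_min (by linarith) (by linarith)
    have hs : 0 < s := lt_min (by linarith) (by linarith)
    set x1 : Fin d → ℝ := fun k => x k + (if k = i then t else 0) - (if k = j then t else 0)
      with hx1_def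
    set x2 : Fin d → ℝ := fun k => x k - (if k = i then s else 0) + (if k = j then s else 0)
      with hx2_def
    have he1i : x1 i = x i + t := by simp [hx1_def, hij]
    have he1j : x1 j = x j - t := by simp [hx1_def, hji]
    have he1o : ∀ k, k ≠ i → k ≠ j → x1 k = x k := fun k h1 h2 => by simp [hx1_def, h1, h2]
    have he2i : x2 i = x i - s := by simp [hx2_def, hij]
    have he2j : x2 j = x j + s := by simp [hx2_def, hji]
    have he2o : ∀ k, k ≠ i → k ≠ j → x2 k = x k := fun k h1 h2 => by simp [hx2_def, h1, h2]
    -- bounds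
    have hb1 : ∀ k, (⌊x k⌋:ℝ) ≤ x1 k ∧ x1 k ≤ (⌈x k⌉:ℝ) := by
      intro k
      by_cases hki : k = i
      · subst hki
        rw [he1i]
        have := min_le_left ((⌈x k⌉:ℝ) - x k) (x j - (⌊x j⌋:ℝ))
        constructor
        · linarith [Int.floor_le (x k)]
        · rw [← ht_def] at this; linarith
      · by_cases hkj : k = j
        · subst hkj
          rw [he1j]
          have := min_le_right ((⌈x i⌉:ℝ) - x i) (x k - (⌊x k⌋:ℝ))
          rw [← ht_def] at this
          constructor
          · linarith
          · linarith [Int.le_ceil (x k)]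
        · rw [he1o k hki hkj]
          exact ⟨Int.floor_le (x k), Int.le_ceil (x k)⟩
    have hb2 : ∀ k, (⌊x k⌋:ℝ) ≤ x2 k ∧ x2 k ≤ (⌈x k⌉:ℝ) := by
      intro k
      by_cases hki : k = i
      · subst hki
        rw [he2i]
        have := min_le_left (x k - (⌊x k⌋:ℝ)) ((⌈x j⌉:ℝ) - x j)
        rw [← hs_def] at this
        constructor
        · linarith
        · linarith [Int.le_ceil (x k)]
      · by_cases hkj : k = j
        · subst hkj
          rw [he2j]
          have := min_le_right (x i - (⌊x i⌋:ℝ)) ((⌈x k⌉:ℝ) - x k)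
          rw [← hs_def] at this
          constructor
          · linarith [Int.floor_le (x k)]
          · linarith
        · rw [he2o k hki hkj]
          exact ⟨Int.floor_le (x k), Int.le_ceil (x k)⟩
    have hx1nn : ∀ k, 0 ≤ x1 k := fun k =>
      le_trans (by exact_mod_cast Int.floor_nonneg.mpr (hx k)) (hb1 k).1
    have hx2nn : ∀ k, 0 ≤ x2 k := fun k =>
      le_trans (by exact_mod_cast Int.floor_nonneg.mpr (hx k)) (hb2 k).1
    -- sums
    have hsum1 : ∑ k, x1 k = (N : ℝ) := by
      simp only [hx1_def]
      rw [Finset.sum_sub_distrib, Finset.sum_add_distrib]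
      simp [Finset.sum_ite_eq', hsum]
    have hsum2 : ∑ k, x2 k = (N : ℝ) := by
      simp only [hx2_def]
      rw [Finset.sum_add_distrib, Finset.sum_sub_distrib]
      simp [Finset.sum_ite_eq', hsum]
    -- one coordinate becomes integral in x1
    have hw1 : ∃ w, w ∈ Finset.univ.filter (fun k => x k ≠ (⌊x k⌋:ℝ)) ∧ x1 w = (⌊x1 w⌋:ℝ) := by
      rcases min_cases ((⌈x i⌉:ℝ) - x i) (x j - (⌊x j⌋:ℝ)) with ⟨h, _⟩ | ⟨h, _⟩
      · refine ⟨i, by simp [hi], ?_⟩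
        have : x1 i = ((⌈x i⌉:ℤ):ℝ) := by
          rw [he1i, ← ht_def] at *; rw [h]; ring
        rw [this, Int.floor_intCast]
      · refine ⟨j, by simp [hj], ?_⟩
        have : x1 j = ((⌊x j⌋:ℤ):ℝ) := by
          rw [he1j, ← ht_def] at *; rw [h]; ring
        rw [this, Int.floor_intCast]
    have hw2 : ∃ w, w ∈ Finset.univ.filter (fun k => x k ≠ (⌊x k⌋:ℝ)) ∧ x2 w = (⌊x2 w⌋:ℝ) := by
      rcases min_cases (x i - (⌊x i⌋:ℝ)) ((⌈x j⌉:ℝ) - x j) with ⟨h, _⟩ | ⟨h, _⟩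
      · refine ⟨i, by simp [hi], ?_⟩
        have : x2 i = ((⌊x i⌋:ℤ):ℝ) := by
          rw [he2i, ← hs_def] at *; rw [h]; ring
        rw [this, Int.floor_intCast]
      · refine ⟨j, by simp [hj], ?_⟩
        have : x2 j = ((⌈x j⌉:ℤ):ℝ) := by
          rw [he2j, ← hs_def] at *; rw [h]; ring
        rw [this, Int.floor_intCast]
    -- card bounds
    have hcard1 : (Finset.univ.filter fun k => x1 k ≠ (⌊x1 k⌋:ℝ)).card ≤ n := by
      obtain ⟨w, hwmem, hwint⟩ := hw1
      have hsub : (Finset.univ.filter fun k => x1 k ≠ (⌊x1 k⌋:ℝ)) ⊆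
          (Finset.univ.filter fun k => x k ≠ (⌊x k⌋:ℝ)).erase w := by
        intro k hk
        rw [Finset.mem_filter] at hk
        rw [Finset.mem_erase, Finset.mem_filter]
        refine ⟨fun h => hk.2 (h ▸ hwint), Finset.mem_univ k, ?_⟩
        by_cases hki : k = i
        · exact hki ▸ hi
        by_cases hkj : k = j
        · exact hkj ▸ hj
        intro h
        apply hk.2
        have : x1 k = x k := by simp [hx1_def, hki, hkj]
        rw [this]; exact h
      calc (Finset.univ.filter fun k => x1 k ≠ (⌊x1 k⌋:ℝ)).card
          ≤ ((Finset.univ.filter fun k => x k ≠ (⌊x k⌋:ℝ)).erase w).card :=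
            Finset.card_le_card hsub
        _ = n := by rw [Finset.card_erase_of_mem hwmem, hcard']; omega
    have hcard2 : (Finset.univ.filter fun k => x2 k ≠ (⌊x2 k⌋:ℝ)).card ≤ n := by
      obtain ⟨w, hwmem, hwint⟩ := hw2
      have hsub : (Finset.univ.filter fun k => x2 k ≠ (⌊x2 k⌋:ℝ)) ⊆
          (Finset.univ.filter fun k => x k ≠ (⌊x k⌋:ℝ)).erase w := by
        intro k hk
        rw [Finset.mem_filter] at hk
        rw [Finset.mem_erase, Finset.mem_filter]
        refine ⟨fun h => hk.2 (h ▸ hwint), Finset.mem_univ k, ?_⟩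
        by_cases hki : k = i
        · exact hki ▸ hi
        by_cases hkj : k = j
        · exact hkj ▸ hj
        intro h
        apply hk.2
        have : x2 k = x k := by simp [hx2_def, hki, hkj]
        rw [this]; exact h
      calc (Finset.univ.filter fun k => x2 k ≠ (⌊x2 k⌋:ℝ)).card
          ≤ ((Finset.univ.filter fun k => x k ≠ (⌊x k⌋:ℝ)).erase w).card :=
            Finset.card_le_card hsub
        _ = n := by rw [Finset.card_erase_of_mem hwmem, hcard']; omega
    obtain ⟨m1, y1, a1, ha1nn, ha1sum, hy1round, hy1sum, hy1avg⟩ := IH x1 hx1nn N hsum1 hcard1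
    obtain ⟨m2, y2, a2, ha2nn, ha2sum, hy2round, hy2sum, hy2avg⟩ := IH x2 hx2nn N hsum2 hcard2
    set lam : ℝ := s / (s + t) with hlam_def
    have hst : 0 < s + t := by linarith
    have hlam0 : 0 ≤ lam := div_nonneg hs.le hst.le
    have hlam1 : lam ≤ 1 := (div_le_one hst).mpr (by linarith)
    have hlt : lam * t = (1 - lam) * s := by
      rw [hlam_def]
      field_simp
      ring
    have hconv : ∀ k, lam * x1 k + (1 - lam) * x2 k = x k := by
      intro k
      by_cases hki : k = i
      · subst hki
        rw [he1i, he2i]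
        linear_combination hlt
      by_cases hkj : k = j
      · subst hkj
        rw [he1j, he2j]
        linear_combination -hlt
      · rw [he1o k hki hkj, he2o k hki hkj]
        ring
    refine ⟨m1 + m2, Fin.append y1 y2,
      Fin.append (fun r => lam * a1 r) (fun r => (1 - lam) * a2 r), ?_, ?_, ?_, ?_, ?_⟩
    · intro r
      refine Fin.addCases ?_ ?_ r
      · intro p; rw [Fin.append_left]; exact mul_nonneg hlam0 (ha1nn p)
      · intro p; rw [Fin.append_right]; exact mul_nonneg (by linarith) (ha2nn p)
    · rw [Fin.sum_univ_add]
      simp only [Fin.append_left, Fin.append_right, ← Finset.mul_sum, ha1sum, ha2sum]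
      ring
    · intro r k
      refine Fin.addCases (fun p => ?_) (fun p => ?_) r
      · rw [Fin.append_left]
        have h1 : ⌊x k⌋ ≤ ⌊x1 k⌋ := Int.le_floor.mpr (hb1 k).1
        have h2 : ⌈x1 k⌉ ≤ ⌈x k⌉ := Int.ceil_le.mpr (hb1 k).2
        have h3 := Int.floor_le_ceil (x1 k)
        rcases hy1round p k with h | h <;>
          exact round_mem (by omega) (by omega)
      · rw [Fin.append_right]
        have h1 : ⌊x k⌋ ≤ ⌊x2 k⌋ := Int.le_floor.mpr (hb2 k).1
        have h2 : ⌈x2 k⌉ ≤ ⌈x k⌉ := Int.ceil_le.mpr (hb2 k).2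
        have h3 := Int.floor_le_ceil (x2 k)
        rcases hy2round p k with h | h <;>
          exact round_mem (by omega) (by omega)
    · intro r
      refine Fin.addCases (fun p => ?_) (fun p => ?_) r
      · rw [Fin.append_left]; exact hy1sum p
      · rw [Fin.append_right]; exact hy2sum p
    · intro k
      rw [Fin.sum_univ_add]
      simp only [Fin.append_left, Fin.append_right, mul_assoc, ← Finset.mul_sum,
        hy1avg k, hy2avg k]
      exact hconv k

theorem comb_sampling_decomposition
    (d : ℕ) (x : Fin d → ℝ) (hx : ∀ i, 0 ≤ x i)
    (N : ℕ) (hsum : ∑ i, x i = (N : ℝ)) :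
    ∃ (m : ℕ) (y : Fin m → (Fin d → ℕ)) (a : Fin m → ℝ),
      (∀ r, 0 ≤ a r) ∧ (∑ r, a r = 1) ∧
      (∀ r i, ((y r i : ℤ) = ⌊x i⌋ ∨ (y r i : ℤ) = ⌈x i⌉)) ∧
      (∀ r, ∑ i, y r i = N) ∧
      (∀ i, ∑ r, a r * (y r i : ℝ) = x i) := by
  exact comb_aux d ((Finset.univ.filter fun i => x i ≠ (⌊x i⌋:ℝ)).card) x hx N hsum le_rfl
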